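/- There exists a constant κ₀ > 0, depending only on the QP data and on c₀, such that every dual-feasible point u = (u⁰, u¹, …, uᵐ, u^{m+1}) with D(u,0) ≥ c₀ satisfies ‖uⁱ‖₂ ≤ κ₀ for every i ∈ {0, 1, …, m+1}. -/

import Mathlib

open scoped RealInnerProductSpace
open Finset

noncomputable section

/-- `ℝⁿ` with the Euclidean norm. -/
abbrev Evec (n : ℕ) : Type := EuclideanSpace ℝ (Fin n)

variable {n m : ℕ}

/-- Apply a matrix to a Euclidean vector. -/
def matApply (M : Matrix (Fin n) (Fin n) ℝ) (x : Evec n) : Evec n := Matrix.toEuclideanLin M x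

/-- ℓ2 operator norm of a matrix. -/
def opNorm (M : Matrix (Fin n) (Fin n) ℝ) : ℝ :=
  ‖(LinearMap.toContinuousLinearMap (Matrix.toEuclideanLin M))‖

/-- `H_ρ := ρ H_f + H_0`. -/
def Hmat (Hf H0 : Matrix (Fin n) (Fin n) ℝ) (ρ : ℝ) : Matrix (Fin n) (Fin n) ℝ := ρ • Hf + H0

/-- `l(d,0) = Σ_{i≤m̄} |⟨aⁱ,d⟩+bᵢ| + Σ_{i>m̄} max(⟨aⁱ,d⟩+bᵢ,0)` (indices `i.val < mbar` are
the equality constraints). Note `lpen mbar a b 0 = J⁰`. -/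
def lpen (mbar : ℕ) (a : Fin m → Evec n) (b : Fin m → ℝ) (d : Evec n) : ℝ :=
  ∑ i : Fin m, if (i : ℕ) < mbar then |⟪a i, d⟫ + b i| else max (⟪a i, d⟫ + b i) 0

/-- `J(d,ρ) = ρ⟨g,d⟩ + ½⟨d,H_ρ d⟩ + l(d,0)`. -/
def Jval (mbar : ℕ) (g : Evec n) (a : Fin m → Evec n) (b : Fin m → ℝ)
    (Hf H0 : Matrix (Fin n) (Fin n) ℝ) (ρ : ℝ) (d : Evec n) : ℝ :=
  ρ * ⟪g, d⟫ + (1/2) * ⟪d, matApply (Hmat Hf H0 ρ) d⟫ + lpen mbar a b d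

/-- `āⁱ := aⁱ/‖aⁱ‖`. -/
def abar (a : Fin m → Evec n) (i : Fin m) : Evec n := ‖a i‖⁻¹ • a i

/-- `b̄ᵢ := bᵢ/‖aⁱ‖`. -/
def bbar (a : Fin m → Evec n) (b : Fin m → ℝ) (i : Fin m) : ℝ := b i / ‖a i‖

/-- `Cᵢ`: hyperplane for equality constraints, half-space for inequality constraints. -/
def Cset (mbar : ℕ) (a : Fin m → Evec n) (b : Fin m → ℝ) (i : Fin m) : Set (Evec n) :=
  if (i : ℕ) < mbar then {d | ⟪abar a i, d⟫ + bbar a b i = 0}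
  else {d | ⟪abar a i, d⟫ + bbar a b i ≤ 0}

/-- Real-valued support function `δ*(y|C) = sup_{z∈C} ⟨y,z⟫` (via `sSup`). -/
def suppFn (y : Evec n) (C : Set (Evec n)) : ℝ := sSup ((fun z => ⟪y, z⟫) '' C)

/-- Dual feasibility: `u⁰ + Σᵢ ‖aⁱ‖ uⁱ + u^{m+1} = 0` and `‖uⁱ‖ ≤ 1` for `i = 1,…,m`. -/
def DualFeasible (a : Fin m → Evec n) (u0 : Evec n) (u : Fin m → Evec n) (um1 : Evec n) : Prop :=
  (u0 + ∑ i, ‖a i‖ • u i + um1 = 0) ∧ ∀ i, ‖u i‖ ≤ 1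

/-- Real-valued dual objective
`D(u,ρ) = -½⟨u⁰-ρg, H_ρ⁻¹(u⁰-ρg)⟩ - Σᵢ ‖aⁱ‖ δ*(uⁱ|Cᵢ) - δ*(u^{m+1}|X)`. -/
def Dval (mbar : ℕ) (g : Evec n) (a : Fin m → Evec n) (b : Fin m → ℝ)
    (Hf H0 : Matrix (Fin n) (Fin n) ℝ) (X : Set (Evec n)) (ρ : ℝ)
    (u0 : Evec n) (u : Fin m → Evec n) (um1 : Evec n) : ℝ :=
  -(1/2) * ⟪u0 - ρ • g, matApply (Hmat Hf H0 ρ)⁻¹ (u0 - ρ • g)⟫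
    - ∑ i, ‖a i‖ * suppFn (u i) (Cset mbar a b i)
    - suppFn um1 X

/-- Extended-real-valued support function. -/
def suppFnE (y : Evec n) (C : Set (Evec n)) : EReal :=
  ⨆ z ∈ C, ((⟪y, z⟫ : ℝ) : EReal)

/-- Extended-real-valued dual objective (value in `ℝ ∪ {±∞}`; it is `-∞` when a support
function is `+∞`). -/
def DvalE (mbar : ℕ) (g : Evec n) (a : Fin m → Evec n) (b : Fin m → ℝ)
    (Hf H0 : Matrix (Fin n) (Fin n) ℝ) (X : Set (Evec n)) (ρ : ℝ)
    (u0 : Evec n) (u : Fin m → Evec n) (um1 : Evec n) : EReal :=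
  ((-(1/2) * ⟪u0 - ρ • g, matApply (Hmat Hf H0 ρ)⁻¹ (u0 - ρ • g)⟫ : ℝ) : EReal)
    - ∑ i, (‖a i‖ : EReal) * suppFnE (u i) (Cset mbar a b i)
    - suppFnE um1 X


lemma inner_matApply_pos' {n : ℕ} (M : Matrix (Fin n) (Fin n) ℝ) (hM : M.PosDef)
    (x : Evec n) (hx : x ≠ 0) : 0 < ⟪x, matApply M x⟫ := by
  have h := hM.dotProduct_mulVec_pos (x := WithLp.equiv 2 (Fin n → ℝ) x) (by simpa using hx)
  refine lt_of_lt_of_eq h ?_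
  rw [matApply, EuclideanSpace.inner_eq_star_dotProduct, dotProduct_comm]; rfl

lemma quad_lb' {n : ℕ} (hn : 1 ≤ n) (M : Matrix (Fin n) (Fin n) ℝ) (hM : M.PosDef) :
    ∃ μ > 0, ∀ x : Evec n, μ * ‖x‖ ^ 2 ≤ ⟪x, matApply M x⟫ := by
  have hcont : Continuous fun x : Evec n => ⟪x, matApply M x⟫ :=
    (continuous_id).inner ((Matrix.toEuclideanLin M).continuous_of_finiteDimensional)
  have hS : IsCompact (Metric.sphere (0 : Evec n) 1) := isCompact_sphere 0 1
  have hSne : (Metric.sphere (0 : Evec n) 1).Nonempty := by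
    refine ⟨EuclideanSpace.single ⟨0, hn⟩ (1:ℝ), ?_⟩
    simp [EuclideanSpace.norm_single]
  obtain ⟨x₀, hx₀S, hmin⟩ := hS.exists_isMinOn hSne (hcont.continuousOn)
  have hx₀ : x₀ ≠ 0 := by
    intro h; rw [Metric.mem_sphere, h] at hx₀S; simp at hx₀S
  refine ⟨⟪x₀, matApply M x₀⟫, inner_matApply_pos' M hM x₀ hx₀, fun x => ?_⟩
  rcases eq_or_ne x 0 with rfl | hx
  · simp
  · have hxn : ‖x‖ ≠ 0 := norm_ne_zero_iff.2 hx
    have hmem : (‖x‖⁻¹ • x) ∈ Metric.sphere (0 : Evec n) 1 := by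
      simp [norm_smul, abs_of_nonneg (inv_nonneg.2 (norm_nonneg x)), inv_mul_cancel₀ hxn]
    have h1 : ⟪x₀, matApply M x₀⟫ ≤ ⟪‖x‖⁻¹ • x, matApply M (‖x‖⁻¹ • x)⟫ := hmin hmem
    have hlin : matApply M (‖x‖⁻¹ • x) = ‖x‖⁻¹ • matApply M x := by
      simp [matApply, map_smul]
    rw [hlin, real_inner_smul_left, real_inner_smul_right] at h1
    have h2 : ⟪x₀, matApply M x₀⟫ * ‖x‖ ^ 2 ≤ (‖x‖⁻¹ * (‖x‖⁻¹ * ⟪x, matApply M x⟫)) * ‖x‖ ^ 2 :=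
      mul_le_mul_of_nonneg_right h1 (by positivity)
    calc ⟪x₀, matApply M x₀⟫ * ‖x‖ ^ 2 ≤ _ := h2
      _ = ⟪x, matApply M x⟫ := by field_simp

/-- There exists a constant `κ₀ > 0`, depending only on the QP data and on `c₀`,
such that every dual-feasible point `u = (u⁰, u¹, …, uᵐ, u^{m+1})` with `D(u,0) ≥ c₀`
satisfies `‖uⁱ‖₂ ≤ κ₀` for every `i ∈ {0, 1, …, m+1}`. -/
theorem statement_0
    (n m mbar : ℕ) (hn : 1 ≤ n) (hmm : mbar ≤ m)
    (g : Evec n) (a : Fin m → Evec n) (ha : ∀ i, a i ≠ 0) (b : Fin m → ℝ)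
    (Hf H0 : Matrix (Fin n) (Fin n) ℝ) (hHf : Hf.IsHermitian) (hH0 : H0.IsHermitian)
    (ρ₀ : ℝ) (hρ₀ : 0 < ρ₀)
    (hpos : ∀ ρ ∈ Set.Icc (0:ℝ) ρ₀, (Hmat Hf H0 ρ).PosDef)
    (X : Set (Evec n)) (hXne : X.Nonempty) (hXcp : IsCompact X)
    (hXcv : Convex ℝ X) (hX0 : (0 : Evec n) ∈ X)
    (c₀ : ℝ) :
    ∃ κ₀ : ℝ, 0 < κ₀ ∧
      ∀ (u0 : Evec n) (u : Fin m → Evec n) (um1 : Evec n),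
        DualFeasible a u0 u um1 →
        (c₀ : EReal) ≤ DvalE mbar g a b Hf H0 X 0 u0 u um1 →
        ‖u0‖ ≤ κ₀ ∧ (∀ i, ‖u i‖ ≤ κ₀) ∧ ‖um1‖ ≤ κ₀ := by
  classical
  have hM : (Hmat Hf H0 0).PosDef := hpos 0 ⟨le_rfl, hρ₀.le⟩
  have hMinv : ((Hmat Hf H0 0)⁻¹).PosDef := hM.inv
  obtain ⟨μ, hμ, hquad⟩ := quad_lb' hn _ hMinv
  set K : ℝ := ∑ i, ‖a i‖ * |bbar a b i| with hK
  set B : ℝ := Real.sqrt (2 * max (K - c₀) 0 / μ) with hBdef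
  have hB0 : 0 ≤ B := Real.sqrt_nonneg _
  have hSa : 0 ≤ ∑ i, ‖a i‖ := Finset.sum_nonneg fun i _ => norm_nonneg _
  refine ⟨B + (∑ i, ‖a i‖) + 1, by positivity, ?_⟩
  rintro u0 u um1 ⟨hfeas, hub⟩ hD
  -- lower bounds on the support-function terms
  have habar : ∀ i, ‖abar a i‖ = 1 := fun i => by
    rw [abar, norm_smul, norm_inv, norm_norm, inv_mul_cancel₀ (norm_ne_zero_iff.2 (ha i))]
  have hz : ∀ i : Fin m, ((-(‖a i‖ * |bbar a b i|) : ℝ) : EReal)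
      ≤ (‖a i‖ : EReal) * suppFnE (u i) (Cset mbar a b i) := by
    intro i
    set z : Evec n := (-(bbar a b i)) • abar a i with hzdef
    have hip : ⟪abar a i, z⟫ + bbar a b i = 0 := by
      rw [hzdef, real_inner_smul_right, real_inner_self_eq_norm_mul_norm, habar i]; ring
    have hzC : z ∈ Cset mbar a b i := by
      unfold Cset; split
      · exact hip
      · exact le_of_eq hip
    have hsupp : ((⟪u i, z⟫ : ℝ) : EReal) ≤ suppFnE (u i) (Cset mbar a b i) :=
      le_iSup₂ (f := fun w (_ : w ∈ Cset mbar a b i) => ((⟪u i, w⟫ : ℝ) : EReal)) z hzC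
    have hz2 : ‖z‖ = |bbar a b i| := by
      rw [hzdef, norm_smul, habar i, mul_one, Real.norm_eq_abs, abs_neg]
    have hiz : -|bbar a b i| ≤ ⟪u i, z⟫ := by
      have h1 : |⟪u i, z⟫| ≤ ‖u i‖ * ‖z‖ := abs_real_inner_le_norm _ _
      have h3 := neg_abs_le (⟪u i, z⟫ : ℝ)
      rw [hz2] at h1
      nlinarith [abs_nonneg (bbar a b i), hub i, abs_nonneg (⟪u i, z⟫ : ℝ)]
    calc ((-(‖a i‖ * |bbar a b i|) : ℝ) : EReal)
        = (‖a i‖ : EReal) * ((-|bbar a b i| : ℝ) : EReal) := by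
          rw [← EReal.coe_mul]; norm_cast; ring
      _ ≤ (‖a i‖ : EReal) * ((⟪u i, z⟫ : ℝ) : EReal) := by
          apply mul_le_mul_of_nonneg_left _ (by exact_mod_cast norm_nonneg (a i))
          exact_mod_cast hiz
      _ ≤ (‖a i‖ : EReal) * suppFnE (u i) (Cset mbar a b i) :=
          mul_le_mul_of_nonneg_left hsupp (by exact_mod_cast norm_nonneg (a i))
  have hzsum : ((-K : ℝ) : EReal) ≤ ∑ i, (‖a i‖ : EReal) * suppFnE (u i) (Cset mbar a b i) := by
    have hcoe : ((-K : ℝ) : EReal) = ∑ i : Fin m, ((-(‖a i‖ * |bbar a b i|) : ℝ) : EReal) := by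
      rw [hK, ← Finset.sum_neg_distrib]
      exact map_sum (⟨⟨Real.toEReal, EReal.coe_zero⟩, EReal.coe_add⟩ : ℝ →+ EReal) _ _
    rw [hcoe]
    exact Finset.sum_le_sum fun i _ => hz i
  have hT : (0 : EReal) ≤ suppFnE um1 X := by
    have h0 : ((⟪um1, (0 : Evec n)⟫ : ℝ) : EReal) ≤ suppFnE um1 X :=
      le_iSup₂ (f := fun w (_ : w ∈ X) => ((⟪um1, w⟫ : ℝ) : EReal)) 0 hX0
    simpa using h0
  -- extract the real inequality
  set A : ℝ := -(1/2) * ⟪u0, matApply (Hmat Hf H0 0)⁻¹ u0⟫ with hAdef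
  have hDle : DvalE mbar g a b Hf H0 X 0 u0 u um1 ≤ ((A + K : ℝ) : EReal) := by
    have h0g : u0 - (0:ℝ) • g = u0 := by simp
    unfold DvalE
    rw [h0g]
    calc ((A : ℝ) : EReal) - (∑ i, (‖a i‖ : EReal) * suppFnE (u i) (Cset mbar a b i))
          - suppFnE um1 X
        ≤ ((A : ℝ) : EReal) - ((-K : ℝ) : EReal) - (0 : EReal) :=
          EReal.sub_le_sub (EReal.sub_le_sub le_rfl hzsum) hT
      _ = ((A + K : ℝ) : EReal) := by
          rw [sub_zero, ← EReal.coe_sub]; norm_cast; ring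
  have hreal : c₀ ≤ A + K := by exact_mod_cast le_trans hD hDle
  -- bound ‖u0‖
  have hq := hquad u0
  have hqB : μ * ‖u0‖ ^ 2 ≤ 2 * max (K - c₀) 0 := by
    have : ⟪u0, matApply (Hmat Hf H0 0)⁻¹ u0⟫ ≤ 2 * (K - c₀) := by
      rw [hAdef] at hreal; linarith
    have h2 : 2 * (K - c₀) ≤ 2 * max (K - c₀) 0 := by
      have := le_max_left (K - c₀) (0:ℝ); linarith
    linarith
  have hu0 : ‖u0‖ ≤ B := by
    have hBsq : B ^ 2 = 2 * max (K - c₀) 0 / μ := by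
      rw [hBdef, Real.sq_sqrt (by positivity)]
    by_contra hcon
    push_neg at hcon
    have : B ^ 2 < ‖u0‖ ^ 2 := by nlinarith [norm_nonneg u0]
    rw [hBsq] at this
    have : 2 * max (K - c₀) 0 < μ * ‖u0‖ ^ 2 := by
      rw [div_lt_iff₀ hμ] at this; nlinarith
    linarith
  -- bound ‖um1‖
  have hum1 : ‖um1‖ ≤ B + ∑ i, ‖a i‖ := by
    have heq : um1 = -(u0 + ∑ i, ‖a i‖ • u i) := by
      have := hfeas
      rw [add_eq_zero_iff_eq_neg] at this
      · linear_combination (norm := module) this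
    rw [heq, norm_neg]
    calc ‖u0 + ∑ i, ‖a i‖ • u i‖ ≤ ‖u0‖ + ‖∑ i, ‖a i‖ • u i‖ := norm_add_le _ _
      _ ≤ B + ∑ i, ‖a i‖ := by
          refine add_le_add hu0 ?_
          refine le_trans (norm_sum_le _ _) (Finset.sum_le_sum fun i _ => ?_)
          rw [norm_smul, Real.norm_eq_abs, abs_of_nonneg (norm_nonneg _)]
          exact mul_le_of_le_one_right (norm_nonneg _) (hub i)
  refine ⟨by linarith, fun i => ?_, by linarith⟩
  calc ‖u i‖ ≤ 1 := hub i
    _ ≤ B + (∑ i, ‖a i‖) + 1 := by linarith
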